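/- Let A be a free abelian group with basis α₁,…,α_n and let c: A × A → {±1} be an alternating bimultiplicative map. Define ε: A × A → {±1} as the unique bimultiplicative map with ε(α_i, α_j) = c(α_i, α_j) if i > j and ε(α_i, α_j) = 1 if i ≤ j. Then ε is a 2-cocycle on A with values in {±1} (i.e., ε(a,b)ε(a+b,c) = ε(b,c)ε(a,b+c) for all a,b,c ∈ A), and ε(a,b)ε(b,a)⁻¹ = c(a,b) for all a, b ∈ A. -/

import Mathlib

/-- Let `A` be a free abelian group with ordered basis
`α : Fin n → A`, and `c : A × A → {±1}` alternating and bimultiplicative.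
If `ε : A × A → {±1}` is the bimultiplicative map with
`ε (α i, α j) = c (α i, α j)` for `i > j` and `= 1` for `i ≤ j`, then `ε` is a
2-cocycle and `ε (a, b) * ε (b, a)⁻¹ = c (a, b)` for all `a b`. -/
theorem stmt5 (n : ℕ) (A : Type*) [AddCommGroup A] (α : Module.Basis (Fin n) ℤ A)
    (c : A → A → ℤˣ)
    (hc₁ : ∀ a a' b, c (a + a') b = c a b * c a' b)
    (hc₂ : ∀ a b b', c a (b + b') = c a b * c a b')
    (hcalt : ∀ a, c a a = 1)
    (ε : A → A → ℤˣ)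
    (hε₁ : ∀ a a' b, ε (a + a') b = ε a b * ε a' b)
    (hε₂ : ∀ a b b', ε a (b + b') = ε a b * ε a b')
    (hεval : ∀ i j : Fin n, ε (α i) (α j) = if j < i then c (α i) (α j) else 1) :
    (∀ a b d : A, ε a b * ε (a + b) d = ε b d * ε a (b + d)) ∧
    (∀ a b : A, ε a b * (ε b a)⁻¹ = c a b) := by
  have hinv : ∀ u : ℤˣ, u⁻¹ = u := fun u => by
    rcases Int.units_eq_one_or u with h | h <;> simp [h]
  have hsq : ∀ u : ℤˣ, u * u = 1 := fun u => by
    rcases Int.units_eq_one_or u with h | h <;> simp [h]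
  have hmul : ∀ a b, c a b * c b a = 1 := by
    intro a b
    have h := hcalt (a + b)
    rw [hc₁, hc₂, hc₂, hcalt, hcalt, one_mul, mul_one] at h
    exact h
  have triv : ∀ f : A → ℤˣ, (∀ x y, f (x + y) = f x * f y) →
      (∀ i, f (α i) = 1) → ∀ a, f a = 1 := by
    intro f hf hbasis a
    let g : A →+ Additive ℤˣ := AddMonoidHom.mk' (fun x => Additive.ofMul (f x)) hf
    have hz : ∀ (z : ℤ) (x : A), f (z • x) = f x ^ z := by
      intro z x
      have h := map_zsmul g z x
      have h2 : Additive.ofMul (f (z • x)) = Additive.ofMul (f x ^ z) := by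
        rw [ofMul_zpow]; exact h
      exact Additive.ofMul.injective h2
    have ha : a ∈ Submodule.span ℤ (Set.range α) := α.mem_span a
    induction ha using Submodule.span_induction with
    | mem x hx => obtain ⟨i, rfl⟩ := hx; exact hbasis i
    | zero =>
        have h0 := hf 0 0
        rw [add_zero] at h0
        exact mul_left_cancel (a := f 0) (by rw [← h0, mul_one])
    | add x y _ _ hx hy => rw [hf, hx, hy, one_mul]
    | smul z x _ hx => rw [hz, hx, one_zpow]
  have hF : ∀ a b, ε a b * ε b a * c a b = 1 := by
    intro a b
    refine triv (fun a => ε a b * ε b a * c a b) ?_ ?_ a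
    · intro x y
      rw [hε₁, hε₂, hc₁]
      simp [mul_comm, mul_left_comm, mul_assoc]
    · intro i
      refine triv (fun b => ε (α i) b * ε b (α i) * c (α i) b) ?_ ?_ b
      · intro x y
        rw [hε₂, hε₁, hc₂]
        simp [mul_comm, mul_left_comm, mul_assoc]
      · intro j
        rw [hεval, hεval]
        rcases lt_trichotomy i j with h | h | h
        · rw [if_neg (asymm h), if_pos h, one_mul]
          exact hmul _ _
        · subst h
          simp [hcalt]
        · rw [if_pos h, if_neg (asymm h), mul_one]
          exact hsq _
  constructor
  · intro a b d
    rw [hε₁, hε₂]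
    simp [mul_comm, mul_left_comm, mul_assoc]
  · intro a b
    rw [hinv]
    have h : ε a b * ε b a = (c a b)⁻¹ := eq_inv_of_mul_eq_one_left (hF a b)
    rw [h, hinv]
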